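/- Let n ≥ 2. The function H_n(Z) = (N(Z)^{1/2})^{1−n} is holomorphic on ℂ_G^{n+1} and is complex harmonic there: □_ℂ H_n = Σ_{j=0}^n ∂²H_n/∂z_j² = 0 on ℂ_G^{n+1}. -/

import Mathlib

open scoped BigOperators

/-- `N(Z) = ∑_{j=0}^n z_j²` on `ℂ^{n+1}`. -/
noncomputable def Ncomplex (n : ℕ) (Z : Fin (n + 1) → ℂ) : ℂ := ∑ j, Z j ^ 2

/-- The domain `ℂ_G^{n+1} = ℂ^{n+1} ∖ {Z : N(Z) is real and ≤ 0}`. -/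
def CG (n : ℕ) : Set (Fin (n + 1) → ℂ) :=
  {Z | ¬((Ncomplex n Z).im = 0 ∧ (Ncomplex n Z).re ≤ 0)}

/-- `H_n(Z) = (N(Z)^{1/2})^{1-n}`, where `N(Z)^{1/2}` is the branch of the square root
with positive real part (the principal branch, realized via `Complex.cpow`). -/
noncomputable def Hfun (n : ℕ) (Z : Fin (n + 1) → ℂ) : ℂ :=
  (Ncomplex n Z ^ ((1 : ℂ) / 2)) ^ ((1 : ℤ) - (n : ℤ))

/-- The `j`-th complex partial derivative. -/
noncomputable def pdC {n : ℕ} (f : (Fin (n + 1) → ℂ) → ℂ) (j : Fin (n + 1))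
    (Z : Fin (n + 1) → ℂ) : ℂ :=
  fderiv ℂ f Z (Pi.single j 1)

/-- The complex Laplacian `□_ℂ f = ∑_j ∂²f/∂z_j²`. -/
noncomputable def laplacianC {n : ℕ} (f : (Fin (n + 1) → ℂ) → ℂ)
    (Z : Fin (n + 1) → ℂ) : ℂ :=
  ∑ j, pdC (pdC f j) j Z

section Aux

lemma mem_slit {n : ℕ} {Z : Fin (n + 1) → ℂ} (hZ : Z ∈ CG n) :
    Ncomplex n Z ∈ Complex.slitPlane := by
  rw [Complex.mem_slitPlane_iff]
  by_cases h : (Ncomplex n Z).im = 0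
  · exact Or.inl (not_le.mp fun hle => hZ ⟨h, hle⟩)
  · exact Or.inr h

lemma N_ne_zero {n : ℕ} {Z : Fin (n + 1) → ℂ} (hZ : Z ∈ CG n) : Ncomplex n Z ≠ 0 :=
  Complex.slitPlane_ne_zero (mem_slit hZ)

lemma sqN_ne_zero {n : ℕ} {Z : Fin (n + 1) → ℂ} (hZ : Z ∈ CG n) :
    Ncomplex n Z ^ ((1 : ℂ) / 2) ≠ 0 := by
  simp [Complex.cpow_eq_zero_iff, N_ne_zero hZ]

lemma sq_sqN {n : ℕ} {Z : Fin (n + 1) → ℂ} (hZ : Z ∈ CG n) :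
    (Ncomplex n Z ^ ((1 : ℂ) / 2)) ^ (2 : ℤ) = Ncomplex n Z := by
  have h0 := N_ne_zero hZ
  have : Ncomplex n Z ^ ((1 : ℂ) / 2) * Ncomplex n Z ^ ((1 : ℂ) / 2) = Ncomplex n Z := by
    rw [← Complex.cpow_add _ _ h0]
    norm_num
  rw [show (2 : ℤ) = (1 : ℤ) + 1 by norm_num, zpow_add₀ (sqN_ne_zero hZ), zpow_one]
  exact this

lemma hasDerivAt_phi (m : ℤ) {w : ℂ} (hw : w ∈ Complex.slitPlane) :
    HasDerivAt (fun w : ℂ => (w ^ ((1 : ℂ) / 2)) ^ m)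
      (((m : ℂ) / 2) * (w ^ ((1 : ℂ) / 2)) ^ (m - 2)) w := by
  have hw0 : w ≠ 0 := Complex.slitPlane_ne_zero hw
  have hs0 : w ^ ((1 : ℂ) / 2) ≠ 0 := by
    simp [Complex.cpow_eq_zero_iff, hw0]
  have h1 : HasDerivAt (fun w : ℂ => w ^ ((1 : ℂ) / 2))
      (((1 : ℂ) / 2) * w ^ ((1 : ℂ) / 2 - 1)) w :=
    (Complex.hasStrictDerivAt_cpow_const hw).hasDerivAt
  have h2 : HasDerivAt (fun s : ℂ => s ^ m)
      ((m : ℂ) * (w ^ ((1 : ℂ) / 2)) ^ (m - 1)) (w ^ ((1 : ℂ) / 2)) :=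
    hasDerivAt_zpow m _ (Or.inl hs0)
  have h3 := h2.comp w h1
  refine h3.congr_deriv ?_
  have hinv : w ^ ((1 : ℂ) / 2 - 1) = (w ^ ((1 : ℂ) / 2))⁻¹ := by
    rw [show ((1 : ℂ) / 2 - 1) = -((1 : ℂ) / 2) by ring, Complex.cpow_neg]
  rw [hinv, show (m : ℂ) * (w ^ ((1 : ℂ) / 2)) ^ (m - 1) * (1 / 2 * (w ^ ((1 : ℂ) / 2))⁻¹)
      = ((m : ℂ) / 2) * ((w ^ ((1 : ℂ) / 2)) ^ (m - 1) * (w ^ ((1 : ℂ) / 2))⁻¹) by ring]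
  congr 1
  rw [show m - 2 = (m - 1) - 1 by ring, zpow_sub_one₀ hs0 (m - 1)]

noncomputable def Dg (n : ℕ) (Z : Fin (n + 1) → ℂ) : (Fin (n + 1) → ℂ) →L[ℂ] ℂ :=
  ∑ j, ((2 : ℂ) * Z j) • (ContinuousLinearMap.proj j : (Fin (n + 1) → ℂ) →L[ℂ] ℂ)

lemma hasFDerivAt_N (n : ℕ) (Z : Fin (n + 1) → ℂ) :
    HasFDerivAt (Ncomplex n) (Dg n Z) Z := by
  have h : ∀ j : Fin (n + 1), HasFDerivAt (fun Z : Fin (n + 1) → ℂ => Z j ^ 2)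
      (((2 : ℂ) * Z j) • (ContinuousLinearMap.proj j : (Fin (n + 1) → ℂ) →L[ℂ] ℂ)) Z := by
    intro j
    have h := hasFDerivAt_apply (𝕜 := ℂ) j Z
    have heq : ((2 : ℂ) * Z j) • (ContinuousLinearMap.proj j : (Fin (n + 1) → ℂ) →L[ℂ] ℂ)
        = Z j • (ContinuousLinearMap.proj j : (Fin (n + 1) → ℂ) →L[ℂ] ℂ)
          + Z j • (ContinuousLinearMap.proj j : (Fin (n + 1) → ℂ) →L[ℂ] ℂ) := by
      ext W
      simp [ContinuousLinearMap.smul_apply]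
      ring
    rw [heq]
    simpa only [pow_two, Pi.mul_def] using h.mul h
  have hs := HasFDerivAt.sum (u := Finset.univ) (fun j _ => h j)
  rw [show Ncomplex n = ∑ j, fun Z : Fin (n + 1) → ℂ => Z j ^ 2 by ext W; simp [Ncomplex]]
  exact hs

lemma Dg_apply (n : ℕ) (Z : Fin (n + 1) → ℂ) (j : Fin (n + 1)) :
    Dg n Z (Pi.single j 1) = 2 * Z j := by
  simp [Dg, Pi.single_apply]

lemma hasFDerivAt_G (n : ℕ) (m : ℤ) {Z : Fin (n + 1) → ℂ} (hZ : Z ∈ CG n) :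
    HasFDerivAt (fun Z : Fin (n + 1) → ℂ => (Ncomplex n Z ^ ((1 : ℂ) / 2)) ^ m)
      ((((m : ℂ) / 2) * (Ncomplex n Z ^ ((1 : ℂ) / 2)) ^ (m - 2)) • Dg n Z) Z :=
  (hasDerivAt_phi m (mem_slit hZ)).comp_hasFDerivAt Z (hasFDerivAt_N n Z)

lemma pdC_G (n : ℕ) (m : ℤ) (j : Fin (n + 1)) {Z : Fin (n + 1) → ℂ} (hZ : Z ∈ CG n) :
    pdC (fun Z : Fin (n + 1) → ℂ => (Ncomplex n Z ^ ((1 : ℂ) / 2)) ^ m) j Z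
      = (m : ℂ) * (Ncomplex n Z ^ ((1 : ℂ) / 2)) ^ (m - 2) * Z j := by
  rw [pdC, (hasFDerivAt_G n m hZ).fderiv]
  simp [Dg_apply]
  ring

lemma isOpen_CG (n : ℕ) : IsOpen (CG n) := by
  have hc : Continuous (Ncomplex n) := by
    unfold Ncomplex
    fun_prop
  have hcl : IsClosed {w : ℂ | w.im = 0 ∧ w.re ≤ 0} :=
    (isClosed_eq Complex.continuous_im continuous_const).inter
      (isClosed_le Complex.continuous_re continuous_const)
  have : CG n = (Ncomplex n) ⁻¹' {w : ℂ | w.im = 0 ∧ w.re ≤ 0}ᶜ := rfl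
  rw [this]
  exact hcl.isOpen_compl.preimage hc

lemma pdC_pdC_G (n : ℕ) (m : ℤ) (j : Fin (n + 1)) {Z : Fin (n + 1) → ℂ} (hZ : Z ∈ CG n) :
    pdC (pdC (fun Z : Fin (n + 1) → ℂ => (Ncomplex n Z ^ ((1 : ℂ) / 2)) ^ m) j) j Z
      = (m : ℂ) * ((m : ℂ) - 2) * (Ncomplex n Z ^ ((1 : ℂ) / 2)) ^ (m - 4) * Z j * Z j
        + (m : ℂ) * (Ncomplex n Z ^ ((1 : ℂ) / 2)) ^ (m - 2) := by
  set F : (Fin (n + 1) → ℂ) → ℂ :=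
    fun Z => (m : ℂ) * (Ncomplex n Z ^ ((1 : ℂ) / 2)) ^ (m - 2) * Z j with hF
  have heq : pdC (fun Z : Fin (n + 1) → ℂ => (Ncomplex n Z ^ ((1 : ℂ) / 2)) ^ m) j
      =ᶠ[nhds Z] F :=
    Filter.eventuallyEq_of_mem ((isOpen_CG n).mem_nhds hZ) (fun W hW => pdC_G n m j hW)
  have hc : HasFDerivAt (fun Z : Fin (n + 1) → ℂ => (m : ℂ) * (Ncomplex n Z ^ ((1 : ℂ) / 2)) ^ (m - 2))
      ((m : ℂ) • ((((m : ℂ) - 2) / 2) * (Ncomplex n Z ^ ((1 : ℂ) / 2)) ^ ((m - 2) - 2)) • Dg n Z) Z := by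
    have := (hasFDerivAt_G n (m - 2) hZ).const_mul (m : ℂ)
    rw [show ((m : ℂ) - 2) = ((m - 2 : ℤ) : ℂ) by push_cast; ring]
    exact this
  have hd : HasFDerivAt (fun Z : Fin (n + 1) → ℂ => Z j)
      (ContinuousLinearMap.proj j : (Fin (n + 1) → ℂ) →L[ℂ] ℂ) Z := hasFDerivAt_apply j Z
  have hFd : HasFDerivAt F
      (((m : ℂ) * (Ncomplex n Z ^ ((1 : ℂ) / 2)) ^ (m - 2)) •
          (ContinuousLinearMap.proj j : (Fin (n + 1) → ℂ) →L[ℂ] ℂ)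
        + Z j • ((m : ℂ) • ((((m : ℂ) - 2) / 2) * (Ncomplex n Z ^ ((1 : ℂ) / 2)) ^ ((m - 2) - 2)) • Dg n Z)) Z :=
    hc.mul hd
  rw [pdC, heq.fderiv_eq, hFd.fderiv]
  simp [Dg_apply, Pi.single_eq_same, show m - 2 - 2 = m - 4 by ring]
  ring

end Aux

/-- for `n ≥ 2`, the function `H_n(Z) = (N(Z)^{1/2})^{1-n}` is holomorphic
on `ℂ_G^{n+1}` and complex harmonic there: `□_ℂ H_n = 0` on `ℂ_G^{n+1}`. -/
theorem Hfun_holomorphic_and_harmonic (n : ℕ) (hn : 2 ≤ n) :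
    DifferentiableOn ℂ (Hfun n) (CG n) ∧ ∀ Z ∈ CG n, laplacianC (Hfun n) Z = 0 := by
  constructor
  · intro Z hZ
    exact (hasFDerivAt_G n ((1 : ℤ) - n) hZ).differentiableAt.differentiableWithinAt
  · intro Z hZ
    set m : ℤ := (1 : ℤ) - n with hm
    set S : ℂ := Ncomplex n Z ^ ((1 : ℂ) / 2) with hS
    have hs0 : S ≠ 0 := sqN_ne_zero hZ
    have hsq : S ^ (2 : ℤ) = Ncomplex n Z := sq_sqN hZ
    have hkey : ∀ j, pdC (pdC (Hfun n) j) j Z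
        = (m : ℂ) * ((m : ℂ) - 2) * S ^ (m - 4) * Z j * Z j + (m : ℂ) * S ^ (m - 2) :=
      fun j => pdC_pdC_G n m j hZ
    rw [laplacianC]
    simp only [hkey]
    rw [Finset.sum_add_distrib, Finset.sum_const, Finset.card_univ, Fintype.card_fin]
    have h1 : ∑ j : Fin (n + 1), (m : ℂ) * ((m : ℂ) - 2) * S ^ (m - 4) * Z j * Z j
        = (m : ℂ) * ((m : ℂ) - 2) * S ^ (m - 4) * Ncomplex n Z := by
      rw [Ncomplex, Finset.mul_sum]
      congr 1
      ext j
      ring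
    have h2 : S ^ (m - 4) * S ^ (2 : ℤ) = S ^ (m - 2) := by
      rw [← zpow_add₀ hs0]
      congr 1
      ring
    have hmc : (m : ℂ) = 1 - n := by push_cast [hm]; ring
    rw [h1, ← hsq, nsmul_eq_mul]
    push_cast
    linear_combination ((m : ℂ) * ((m : ℂ) - 2)) * h2 + ((m : ℂ) * S ^ (m - 2)) * hmc
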